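/- One-step energy decrease for a stabilized semi-implicit gradient-flow step in a Hilbert space: Let H be a real Hilbert space, E : H → ℝ of the form E(x) = (1/2)⟨Bx, x⟩ + G(x) + ⟨ℓ, x⟩ where B is a bounded self-adjoint nonnegative operator, G : H → ℝ is C¹ with derivative g satisfying G(y) − G(x) ≤ ⟨g(x), y − x⟩ + (L/2)‖y − x‖² for all x, y, and ℓ ∈ H. Given xⁿ, Δt > 0, and stabilization S ≥ L/2, suppose xⁿ⁺¹ satisfies (1/Δt)(xⁿ⁺¹ − xⁿ) + B xⁿ⁺¹ + S(xⁿ⁺¹ − xⁿ) + g(xⁿ) + ℓ = 0 (weakly). Then E(xⁿ⁺¹) ≤ E(xⁿ) for any Δt > 0. -/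
import Mathlib


open RealInnerProductSpace

theorem stmt_16 {H : Type*} [NormedAddCommGroup H] [InnerProductSpace ℝ H]
    [CompleteSpace H] (B : H →L[ℝ] H)
    (hBsym : ∀ x y : H, ⟪B x, y⟫ = ⟪x, B y⟫)
    (hBpos : ∀ x : H, 0 ≤ ⟪B x, x⟫)
    (G : H → ℝ) (g : H → H) (L : ℝ)
    (hg : ∀ x, HasGradientAt G (g x) x)
    (hGL : ∀ x y : H, G y - G x ≤ ⟪g x, y - x⟫ + (L / 2) * ‖y - x‖ ^ 2)
    (ℓ : H) (E : H → ℝ)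
    (hE : ∀ x, E x = (1 / 2 : ℝ) * ⟪B x, x⟫ + G x + ⟪ℓ, x⟫)
    (Δt S : ℝ) (hΔt : 0 < Δt) (hS : S ≥ L / 2)
    (x₀ x₁ : H)
    (hscheme : (1 / Δt) • (x₁ - x₀) + B x₁ + S • (x₁ - x₀) + g x₀ + ℓ = 0) :
    E x₁ ≤ E x₀ := by
  set d := x₁ - x₀ with hd
  -- inner product of scheme with d
  have hdot : (1 / Δt) * ‖d‖ ^ 2 + ⟪B x₁, d⟫ + S * ‖d‖ ^ 2 + ⟪g x₀, d⟫ + ⟪ℓ, d⟫ = 0 := by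
    have := congrArg (fun z => ⟪z, d⟫) hscheme
    simp only [inner_add_left, real_inner_smul_left, inner_zero_left] at this
    rw [real_inner_self_eq_norm_sq] at this
    linarith [this]
  -- B identity
  have hBid : ⟪B x₁, x₁⟫ - ⟪B x₀, x₀⟫ = 2 * ⟪B x₁, d⟫ - ⟪B d, d⟫ := by
    have h1 : ⟪B x₁, x₀⟫ = ⟪B x₀, x₁⟫ := by
      rw [hBsym, real_inner_comm]
    simp only [hd, map_sub, inner_sub_left, inner_sub_right]
    linarith
  have hG := hGL x₀ x₁
  rw [show x₁ - x₀ = d from rfl] at hG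
  have hBd := hBpos d
  have hdnn : (0:ℝ) ≤ ‖d‖ ^ 2 := by positivity
  have hdt : 0 < 1 / Δt := by positivity
  have h1 := hE x₁
  have h0 := hE x₀
  have hℓ : ⟪ℓ, x₁⟫ - ⟪ℓ, x₀⟫ = ⟪ℓ, d⟫ := by
    rw [hd, inner_sub_right]
  nlinarith [mul_nonneg hdt.le hdnn]
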